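/- For the Continuous Poisson distribution with parameter λ, the α-quantile Q_α(λ), defined as the unique x > -1 with Γ(x+1, λ)/Γ(x+1) = α, is a strictly increasing continuous function of λ for each fixed α ∈ (0,1). -/
import Mathlib

open MeasureTheory Set

/-- Upper incomplete Gamma function `Γ(a, λ) = ∫_λ^∞ e^{-s} s^{a-1} ds`. -/
noncomputable def incGamma (a lam : ℝ) : ℝ :=
  ∫ s in Set.Ioi lam, Real.exp (-s) * s ^ (a - 1)

namespace CPQaux

noncomputable def f (a s : ℝ) : ℝ := Real.exp (-s) * s ^ (a - 1)

lemma f_pos {a s : ℝ} (hs : 0 < s) : 0 < f a s :=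
  mul_pos (Real.exp_pos _) (Real.rpow_pos_of_pos hs _)

lemma f_intOn_Ioi {a lam : ℝ} (ha : 0 < a) (hlam : 0 ≤ lam) :
    IntegrableOn (f a) (Ioi lam) :=
  (Real.GammaIntegral_convergent ha).mono_set (Ioi_subset_Ioi hlam)

lemma f_intOn_Ioc {a lam : ℝ} (ha : 0 < a) :
    IntegrableOn (f a) (Ioc 0 lam) :=
  (Real.GammaIntegral_convergent ha).mono_set Ioc_subset_Ioi_self

lemma setIntegral_pos_of_pos {g : ℝ → ℝ} {s : Set ℝ} (hs : MeasurableSet s)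
    (hμ : 0 < volume s)
    (hi : IntegrableOn g s) (hg : ∀ x ∈ s, 0 < g x) : 0 < ∫ x in s, g x := by
  rw [setIntegral_pos_iff_support_of_nonneg_ae ?_ hi]
  · refine lt_of_lt_of_le hμ (measure_mono ?_)
    intro x hx
    exact ⟨(hg x hx).ne', hx⟩
  · filter_upwards [ae_restrict_mem hs] with x hx
    exact (hg x hx).le

lemma setIntegral_lt {g h : ℝ → ℝ} {s : Set ℝ} (hs : MeasurableSet s)
    (hμ : 0 < volume s)
    (hig : IntegrableOn g s) (hih : IntegrableOn h s) (hlt : ∀ x ∈ s, g x < h x) :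
    ∫ x in s, g x < ∫ x in s, h x := by
  have hpos : 0 < ∫ x in s, (h x - g x) :=
    setIntegral_pos_of_pos hs hμ (hih.sub hig) (fun x hx => sub_pos.mpr (hlt x hx))
  rw [integral_sub hih hig] at hpos
  linarith

end CPQaux

open CPQaux

lemma incGamma_eq (a lam : ℝ) : incGamma a lam = ∫ s in Ioi lam, f a s := rfl

noncomputable def lowGamma (a lam : ℝ) : ℝ := ∫ s in Set.Ioc 0 lam, f a s

lemma incGamma_pos {a lam : ℝ} (ha : 0 < a) (hlam : 0 < lam) : 0 < incGamma a lam := by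
  rw [incGamma_eq]
  refine setIntegral_pos_of_pos measurableSet_Ioi ?_ (f_intOn_Ioi ha hlam.le) (fun x hx => f_pos (hlam.trans hx))
  simp [Real.volume_Ioi]

lemma lowGamma_pos {a lam : ℝ} (ha : 0 < a) (hlam : 0 < lam) : 0 < lowGamma a lam := by
  refine setIntegral_pos_of_pos measurableSet_Ioc ?_ (f_intOn_Ioc ha) (fun x hx => f_pos hx.1)
  simp [Real.volume_Ioc, hlam]

lemma Gamma_split {a lam : ℝ} (ha : 0 < a) (hlam : 0 < lam) :
    Real.Gamma a = lowGamma a lam + incGamma a lam := by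
  rw [Real.Gamma_eq_integral ha]
  have : Ioi (0:ℝ) = Ioc 0 lam ∪ Ioi lam := (Ioc_union_Ioi_eq_Ioi hlam.le).symm
  rw [show (∫ x in Ioi (0:ℝ), Real.exp (-x) * x ^ (a-1)) = ∫ x in Ioi (0:ℝ), f a x from rfl,
    this, setIntegral_union (Ioc_disjoint_Ioi le_rfl) measurableSet_Ioi
    (f_intOn_Ioc ha) (f_intOn_Ioi ha hlam.le)]
  rfl

/-- strict decrease in lam -/
lemma incGamma_anti {a l1 l2 : ℝ} (ha : 0 < a) (h1 : 0 < l1) (h12 : l1 < l2) :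
    incGamma a l2 < incGamma a l1 := by
  have key : incGamma a l1 = (∫ s in Ioc l1 l2, f a s) + incGamma a l2 := by
    rw [incGamma_eq, incGamma_eq, ← setIntegral_union (Ioc_disjoint_Ioi le_rfl)
      measurableSet_Ioi ((f_intOn_Ioi ha h1.le).mono_set Ioc_subset_Ioi_self)
      (f_intOn_Ioi ha (h1.trans h12).le), Ioc_union_Ioi_eq_Ioi h12.le]
  have hpos : 0 < ∫ s in Ioc l1 l2, f a s := by
    refine setIntegral_pos_of_pos measurableSet_Ioc ?_ ((f_intOn_Ioi ha h1.le).mono_set Ioc_subset_Ioi_self)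
      (fun x hx => f_pos (h1.trans hx.1))
    simp [Real.volume_Ioc, h12]
  linarith

/-- key inequality: `lam^(a'-a) * incGamma a lam < incGamma a' lam` -/
lemma key_inc {a a' lam : ℝ} (ha : 0 < a) (haa : a < a') (hlam : 0 < lam) :
    lam ^ (a' - a) * incGamma a lam < incGamma a' lam := by
  rw [incGamma_eq, incGamma_eq, ← integral_const_mul]
  refine setIntegral_lt measurableSet_Ioi (by simp [Real.volume_Ioi])
    ((f_intOn_Ioi ha hlam.le).const_mul _) (f_intOn_Ioi (ha.trans haa) hlam.le) ?_
  intro x hx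
  have hx0 : 0 < x := hlam.trans hx
  have : f a' x = x ^ (a' - a) * f a x := by
    unfold f
    rw [show a' - 1 = (a' - a) + (a - 1) by ring, Real.rpow_add hx0]
    ring
  rw [this]
  exact mul_lt_mul_of_pos_right
    (Real.rpow_lt_rpow hlam.le hx (by linarith)) (f_pos hx0)

/-- `lowGamma a' lam ≤ lam^(a'-a) * lowGamma a lam` -/
lemma key_low {a a' lam : ℝ} (ha : 0 < a) (haa : a < a') (hlam : 0 < lam) :
    lowGamma a' lam ≤ lam ^ (a' - a) * lowGamma a lam := by
  rw [lowGamma, lowGamma, ← integral_const_mul]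
  refine setIntegral_mono_on (f_intOn_Ioc (ha.trans haa)) ((f_intOn_Ioc ha).const_mul _)
    measurableSet_Ioc ?_
  intro x hx
  have hx0 : 0 < x := hx.1
  have : f a' x = x ^ (a' - a) * f a x := by
    unfold f
    rw [show a' - 1 = (a' - a) + (a - 1) by ring, Real.rpow_add hx0]
    ring
  rw [this]
  exact mul_le_mul_of_nonneg_right
    (Real.rpow_le_rpow hx0.le hx.2 (by linarith)) (f_pos hx0).le

/-- strict increase of `a ↦ incGamma a lam / Γ a` -/
lemma ratio_strictMono {a a' lam : ℝ} (ha : 0 < a) (haa : a < a') (hlam : 0 < lam) :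
    incGamma a lam / Real.Gamma a < incGamma a' lam / Real.Gamma a' := by
  have ha' : 0 < a' := ha.trans haa
  have hGa : 0 < Real.Gamma a := Real.Gamma_pos_of_pos ha
  have hGa' : 0 < Real.Gamma a' := Real.Gamma_pos_of_pos ha'
  rw [div_lt_div_iff₀ hGa hGa', Gamma_split ha hlam, Gamma_split ha' hlam]
  have h1 := key_inc ha haa hlam
  have h2 := key_low ha haa hlam
  have p1 := incGamma_pos ha hlam
  have p2 := incGamma_pos ha' hlam
  have p3 := lowGamma_pos ha hlam
  have p4 := lowGamma_pos ha' hlam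
  -- need : incGamma a lam * lowGamma a' lam < incGamma a' lam * lowGamma a lam
  nlinarith [mul_lt_mul_of_pos_left h1 p3, mul_le_mul_of_nonneg_right h2 p1.le]

/-- continuity in lam -/
lemma incGamma_contAt {a lam : ℝ} (ha : 0 < a) (hlam : 0 < lam) :
    ContinuousAt (fun l => incGamma a l) lam := by
  set b : ℝ := lam + 1 with hb
  have hint : IntegrableOn (f a) (Icc 0 b) := by
    rw [integrableOn_Icc_iff_integrableOn_Ioc]
    exact f_intOn_Ioc ha
  have hc : ContinuousOn (fun x => ∫ t in Ioc 0 x, f a t) (Icc 0 b) :=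
    intervalIntegral.continuousOn_primitive hint
  have hmem : Icc (0:ℝ) b ∈ nhds lam := by
    refine Icc_mem_nhds hlam (by simp [hb])
  have hca : ContinuousAt (fun x => ∫ t in Ioc 0 x, f a t) lam :=
    hc.continuousAt hmem
  have heq : (fun l => Real.Gamma a - ∫ t in Ioc 0 l, f a t) =ᶠ[nhds lam]
      (fun l => incGamma a l) := by
    filter_upwards [eventually_gt_nhds hlam] with l hl
    have := Gamma_split ha hl
    unfold lowGamma at this
    show Real.Gamma a - _ = _
    linarith
  exact (continuousAt_const.sub hca).congr heq

/-- For fixed `α ∈ (0,1)`, the `α`-quantile `Q_α(λ)` of the Continuous Poisson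
distribution, i.e. the unique `x > -1` with `Γ(x+1, λ)/Γ(x+1) = α`, is a
strictly increasing continuous function of `λ` on `(0, ∞)`. -/
theorem contPoisson_quantile_strictMono_continuous (α : ℝ)
    (hα : α ∈ Set.Ioo (0 : ℝ) 1) (Q : ℝ → ℝ)
    (hQ : ∀ lam : ℝ, 0 < lam → -1 < Q lam ∧
      incGamma (Q lam + 1) lam / Real.Gamma (Q lam + 1) = α) :
    StrictMonoOn Q (Set.Ioi (0 : ℝ)) ∧ ContinuousOn Q (Set.Ioi (0 : ℝ)) := by
  constructor
  · intro l1 h1 l2 h2 h12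
    simp only [Set.mem_Ioi] at h1 h2
    obtain ⟨hq1, he1⟩ := hQ l1 h1
    obtain ⟨hq2, he2⟩ := hQ l2 h2
    by_contra hle
    push_neg at hle
    have ha2 : (0:ℝ) < Q l2 + 1 := by linarith
    have hG : 0 < Real.Gamma (Q l2 + 1) := Real.Gamma_pos_of_pos ha2
    have key : incGamma (Q l2 + 1) l2 / Real.Gamma (Q l2 + 1)
        < incGamma (Q l2 + 1) l1 / Real.Gamma (Q l2 + 1) := by
      have := incGamma_anti ha2 h1 h12
      exact div_lt_div_of_pos_right this hG
    have h3 : α < incGamma (Q l2 + 1) l1 / Real.Gamma (Q l2 + 1) := by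
      rw [← he2]; exact key
    rcases eq_or_lt_of_le hle with heq | hlt
    · rw [heq, he1] at h3; exact lt_irrefl α h3
    · have h4 := ratio_strictMono ha2 (by linarith : Q l2 + 1 < Q l1 + 1) h1
      rw [he1] at h4; linarith
  · intro l0 hl0
    simp only [Set.mem_Ioi] at hl0
    obtain ⟨hq0, he0⟩ := hQ l0 hl0
    rw [Metric.continuousWithinAt_iff]
    intro ε hε
    set ε' := min ε ((Q l0 + 1)/2) with hε'def
    have hε'ε : ε' ≤ ε := min_le_left _ _
    have hε'q : ε' ≤ (Q l0 + 1)/2 := min_le_right _ _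
    have hε'pos : 0 < ε' := lt_min hε (by linarith)
    have hxm : (0:ℝ) < Q l0 - ε' + 1 := by linarith
    have hxp : (0:ℝ) < Q l0 + ε' + 1 := by linarith
    have hlt1 : incGamma (Q l0 - ε' + 1) l0 / Real.Gamma (Q l0 - ε' + 1) < α := by
      rw [← he0]; exact ratio_strictMono hxm (by linarith) hl0
    have hlt2 : α < incGamma (Q l0 + ε' + 1) l0 / Real.Gamma (Q l0 + ε' + 1) := by
      rw [← he0]; exact ratio_strictMono (by linarith) (by linarith) hl0
    have hc1 : ContinuousAt
        (fun l => incGamma (Q l0 - ε' + 1) l / Real.Gamma (Q l0 - ε' + 1)) l0 :=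
      (incGamma_contAt hxm hl0).div_const _
    have hc2 : ContinuousAt
        (fun l => incGamma (Q l0 + ε' + 1) l / Real.Gamma (Q l0 + ε' + 1)) l0 :=
      (incGamma_contAt hxp hl0).div_const _
    have hev : ∀ᶠ l in nhds l0,
        incGamma (Q l0 - ε' + 1) l / Real.Gamma (Q l0 - ε' + 1) < α ∧
        α < incGamma (Q l0 + ε' + 1) l / Real.Gamma (Q l0 + ε' + 1) :=
      (hc1.eventually_lt continuousAt_const hlt1).and
        (continuousAt_const.eventually_lt hc2 hlt2)
    rw [Metric.eventually_nhds_iff] at hev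
    obtain ⟨δ, hδ, hball⟩ := hev
    refine ⟨δ, hδ, fun {l} hl hdist => ?_⟩
    simp only [Set.mem_Ioi] at hl
    obtain ⟨hql, hel⟩ := hQ l hl
    obtain ⟨hb1, hb2⟩ := hball hdist
    have h1 : Q l0 - ε' < Q l := by
      by_contra h; push_neg at h
      rcases eq_or_lt_of_le h with heq | hlt
      · rw [← heq, hel] at hb1; exact lt_irrefl α hb1
      · have := ratio_strictMono (by linarith : (0:ℝ) < Q l + 1)
          (by linarith : Q l + 1 < Q l0 - ε' + 1) hl
        rw [hel] at this; linarith
    have h2 : Q l < Q l0 + ε' := by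
      by_contra h; push_neg at h
      rcases eq_or_lt_of_le h with heq | hlt
      · rw [heq, hel] at hb2; exact lt_irrefl α hb2
      · have := ratio_strictMono hxp
          (by linarith : Q l0 + ε' + 1 < Q l + 1) hl
        rw [hel] at this; linarith
    rw [Real.dist_eq, abs_lt]
    constructor <;> linarith
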